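/- Single-step descent inequality for SGD under PL and WGC: suppose $f$ is $L$-smooth, $\mu$-PL with minimizer value $f(x^*)$, and satisfies the weak growth condition with parameter $\alpha$. For the SGD step $x^{k+1} = x^k - \eta \nabla f_{i_k}(x^k)$ with $i_k$ uniform on $\{1,\ldots,n\}$ and any $\eta > 0$, conditioning on $x^k$: $\mathbb{E}[f(x^{k+1}) \mid x^k] - f(x^*) \leq \left(1 - 2\mu\eta + L^2\eta^2\alpha\right)(f(x^k) - f(x^*))$. -/

import Mathlib

noncomputable section

open RealInnerProductSpace in
private lemma sgd_hasDerivAt_line {d : ℕ} (F : EuclideanSpace ℝ (Fin d) → ℝ)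
    (hF : Differentiable ℝ F) (x v : EuclideanSpace ℝ (Fin d)) (t : ℝ) :
    HasDerivAt (fun s : ℝ => F (x + s • v)) ⟪gradient F (x + t • v), v⟫ t := by
  have hc : HasDerivAt (fun s : ℝ => x + s • v) v t := by
    simpa using ((hasDerivAt_id t).smul_const v).const_add x
  have hG : HasGradientAt F (gradient F (x + t • v)) (x + t • v) :=
    (hF _).hasGradientAt
  have hFd := hasGradientAt_iff_hasFDerivAt.mp hG
  have := hFd.comp_hasDerivAt t hc
  simp only [Function.comp_def] at this
  exact this

open RealInnerProductSpace in
private lemma sgd_descent_lemma {d : ℕ} (F : EuclideanSpace ℝ (Fin d) → ℝ)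
    (hF : Differentiable ℝ F) (L : ℝ)
    (hsmooth : ∀ x y : EuclideanSpace ℝ (Fin d),
      ‖gradient F x - gradient F y‖ ≤ L * ‖x - y‖)
    (x y : EuclideanSpace ℝ (Fin d)) :
    F y ≤ F x + ⟪gradient F x, y - x⟫ + L / 2 * ‖y - x‖ ^ 2 := by
  set v := y - x with hv
  set φ : ℝ → ℝ := fun s => F (x + s • v) with hφdef
  have hφ : ∀ t : ℝ, HasDerivAt φ ⟪gradient F (x + t • v), v⟫ t :=
    fun t => sgd_hasDerivAt_line F hF x v t
  set χ : ℝ → ℝ := fun t => L * ‖v‖ ^ 2 * t ^ 2 / 2 - (φ t - t * ⟪gradient F x, v⟫) with hχdef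
  have hχ : ∀ t : ℝ, HasDerivAt χ
      (L * ‖v‖ ^ 2 * t - (⟪gradient F (x + t • v), v⟫ - ⟪gradient F x, v⟫)) t := by
    intro t
    have h1 : HasDerivAt (fun t : ℝ => L * ‖v‖ ^ 2 * t ^ 2 / 2) (L * ‖v‖ ^ 2 * t) t := by
      have := ((hasDerivAt_pow 2 t).const_mul (L * ‖v‖ ^ 2)).div_const 2
      exact this.congr_deriv (by ring)
    have h2 : HasDerivAt (fun t : ℝ => φ t - t * ⟪gradient F x, v⟫)
        (⟪gradient F (x + t • v), v⟫ - ⟪gradient F x, v⟫) t :=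
      (hφ t).sub (by simpa using (hasDerivAt_id t).mul_const ⟪gradient F x, v⟫)
    exact h1.sub h2
  have hmono : MonotoneOn χ (Set.Icc (0:ℝ) 1) := by
    apply monotoneOn_of_deriv_nonneg (convex_Icc 0 1)
    · exact (fun t _ => ((hχ t).differentiableAt).continuousAt.continuousWithinAt)
    · exact fun t _ => ((hχ t).differentiableAt).differentiableWithinAt
    · intro t ht
      rw [interior_Icc] at ht
      rw [(hχ t).deriv]
      have hineq : ⟪gradient F (x + t • v), v⟫ - ⟪gradient F x, v⟫
          ≤ L * ‖v‖ ^ 2 * t := by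
        rw [← inner_sub_left]
        calc ⟪gradient F (x + t • v) - gradient F x, v⟫
            ≤ ‖gradient F (x + t • v) - gradient F x‖ * ‖v‖ :=
              real_inner_le_norm _ _
          _ ≤ (L * ‖x + t • v - x‖) * ‖v‖ := by
              gcongr; exact hsmooth _ _
          _ = L * ‖v‖ ^ 2 * t := by
              have : x + t • v - x = t • v := by abel
              rw [this, norm_smul, Real.norm_eq_abs, abs_of_pos ht.1]
              ring
      linarith
  have h01 := hmono (Set.mem_Icc.mpr ⟨le_refl 0, zero_le_one⟩)
    (Set.mem_Icc.mpr ⟨zero_le_one, le_refl 1⟩) zero_le_one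
  have hχ0 : χ 0 = - F x := by simp [hχdef, hφdef]
  have hχ1 : χ 1 = L * ‖v‖ ^ 2 / 2 - F y + ⟪gradient F x, v⟫ := by
    have hxy : x + (1:ℝ) • v = y := by rw [one_smul, hv]; abel
    simp only [hχdef, hφdef, hxy, one_pow, one_mul]
    ring
  rw [hχ0, hχ1] at h01
  linarith

open RealInnerProductSpace in
/-- Single-step descent inequality for SGD under the PL condition and the weak
growth condition: conditioned on the current iterate `x`, the expected next
objective gap contracts by the factor `1 - 2μη + L²η²α`. -/
theorem sgd_single_step_pl_wgc
    (d n : ℕ) (hn : 0 < n)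
    (f : Fin n → EuclideanSpace ℝ (Fin d) → ℝ)
    (hdiff : ∀ i, Differentiable ℝ (f i))
    (F : EuclideanSpace ℝ (Fin d) → ℝ)
    (hF : F = fun x => (n : ℝ)⁻¹ * ∑ i, f i x)
    (L μ α : ℝ) (hL : 0 < L) (hμ : 0 < μ)
    (hsmooth : ∀ x y : EuclideanSpace ℝ (Fin d),
      ‖gradient F x - gradient F y‖ ≤ L * ‖x - y‖)
    (xstar : EuclideanSpace ℝ (Fin d))
    (hmin : ∀ x, F xstar ≤ F x)
    (hPL : ∀ x, F x - F xstar ≤ 1 / (2 * μ) * ‖gradient F x‖ ^ 2)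
    (hWGC : ∀ x, (n : ℝ)⁻¹ * ∑ i, ‖gradient (f i) x‖ ^ 2
      ≤ 2 * α * L * (F x - F xstar))
    (η : ℝ) (hη : 0 < η)
    (x : EuclideanSpace ℝ (Fin d)) :
    ((n : ℝ)⁻¹ * ∑ i, F (x - η • gradient (f i) x)) - F xstar
      ≤ (1 - 2 * μ * η + L ^ 2 * η ^ 2 * α) * (F x - F xstar) := by
  have hn0 : (n : ℝ) ≠ 0 := Nat.cast_ne_zero.mpr hn.ne'
  have hFdiff : Differentiable ℝ F := by
    rw [hF]
    exact (Differentiable.fun_sum fun i _ => hdiff i).const_mul _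
  set g : Fin n → EuclideanSpace ℝ (Fin d) := fun i => gradient (f i) x with hg
  set G : EuclideanSpace ℝ (Fin d) := gradient F x with hG
  -- the gradient of F is the average of the gradients
  have hgrad : G = (n : ℝ)⁻¹ • ∑ i, g i := by
    have hfd : ∀ i, HasFDerivAt (f i)
        ((InnerProductSpace.toDual ℝ _) (g i)) x :=
      fun i => hasGradientAt_iff_hasFDerivAt.mp ((hdiff i x).hasGradientAt)
    have hsum : HasFDerivAt (fun z => ∑ i, f i z)
        (∑ i, (InnerProductSpace.toDual ℝ _) (g i)) x :=
      HasFDerivAt.fun_sum fun i _ => hfd i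
    have hFgr : HasGradientAt F ((n : ℝ)⁻¹ • ∑ i, g i) x := by
      rw [hasGradientAt_iff_hasFDerivAt, map_smul, map_sum, hF]
      exact hsum.const_mul _
    rw [hG, hFgr.gradient]
  -- descent lemma for each i
  have hdesc : ∀ i, F (x - η • g i)
      ≤ F x - η * ⟪G, g i⟫ + L / 2 * (η ^ 2 * ‖g i‖ ^ 2) := by
    intro i
    have h := sgd_descent_lemma F hFdiff L hsmooth x (x - η • g i)
    have h1 : x - η • g i - x = -(η • g i) := by abel
    rw [h1, inner_neg_right, real_inner_smul_right, norm_neg, norm_smul,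
      Real.norm_eq_abs, abs_of_pos hη, mul_pow] at h
    linarith
  -- average the descent inequalities
  have havg : (n : ℝ)⁻¹ * ∑ i, F (x - η • g i)
      ≤ (n : ℝ)⁻¹ * ∑ i, (F x - η * ⟪G, g i⟫ + L / 2 * (η ^ 2 * ‖g i‖ ^ 2)) :=
    mul_le_mul_of_nonneg_left (Finset.sum_le_sum fun i _ => hdesc i)
      (by positivity)
  have hinner : (n : ℝ)⁻¹ * ∑ i, ⟪G, g i⟫ = ‖G‖ ^ 2 := by
    rw [← inner_sum, ← real_inner_smul_right, ← hgrad]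
    exact real_inner_self_eq_norm_sq G
  have hexp : (n : ℝ)⁻¹ * ∑ i, (F x - η * ⟪G, g i⟫ + L / 2 * (η ^ 2 * ‖g i‖ ^ 2))
      = F x - η * ((n : ℝ)⁻¹ * ∑ i, ⟪G, g i⟫)
        + L * η ^ 2 / 2 * ((n : ℝ)⁻¹ * ∑ i, ‖g i‖ ^ 2) := by
    rw [Finset.sum_add_distrib, Finset.sum_sub_distrib, Finset.sum_const,
      Finset.card_univ, Fintype.card_fin]
    simp only [← Finset.mul_sum]
    field_simp
    ring
  rw [hexp, hinner] at havg
  -- combine with WGC and PL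
  have hWx := hWGC x
  have hΔ0 : 0 ≤ F x - F xstar := sub_nonneg.mpr (hmin x)
  have hPLx : 2 * μ * (F x - F xstar) ≤ ‖G‖ ^ 2 := by
    have h := hPL x
    rw [← hG] at h
    rw [div_mul_eq_mul_div, one_mul, le_div_iff₀ (by positivity)] at h
    linarith
  have hc1 : L * η ^ 2 / 2 * ((n : ℝ)⁻¹ * ∑ i, ‖g i‖ ^ 2)
      ≤ L * η ^ 2 / 2 * (2 * α * L * (F x - F xstar)) :=
    mul_le_mul_of_nonneg_left hWx (by positivity)
  have hc2 : η * (2 * μ * (F x - F xstar)) ≤ η * ‖G‖ ^ 2 :=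
    mul_le_mul_of_nonneg_left hPLx hη.le
  nlinarith [havg, hc1, hc2]
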